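/- Let m ≥ 1, d ≥ 1, and T ≥ (m+1)·d − 1 be integers. Let u_0, …, u_{T−1} be independent ℝ^m-valued random variables on a probability space (Ω, ℱ, ℙ) such that, for each i, the law of u_i is absolutely continuous with respect to the Lebesgue measure on ℝ^m. Then, almost surely, the sequence (u_0, …, u_{T−1}) is persistently exciting of order d, i.e., almost surely the T − d + 1 windows (u_j, u_{j+1}, …, u_{j+d−1}), for 0 ≤ j ≤ T − d, span (ℝ^m)^d. -/

import Mathlib

open MeasureTheory MvPolynomial Set

lemma continuous_mv_eval' {σ : Type*} (p : MvPolynomial σ ℝ) :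
    Continuous fun x : σ → ℝ => MvPolynomial.eval x p := by
  simp only [MvPolynomial.eval_eq]
  refine continuous_finset_sum _ fun s _ => Continuous.mul continuous_const ?_
  exact continuous_finset_prod _ fun i _ => (continuous_apply i).pow _

lemma vol_eval_ne_zero : ∀ (n : ℕ) (p : MvPolynomial (Fin n) ℝ), p ≠ 0 →
    (volume : Measure (Fin n → ℝ)) {x | MvPolynomial.eval x p = 0} = 0 := by
  intro n
  induction n with
  | zero =>
      intro p hp
      obtain ⟨c, rfl⟩ := C_surjective (Fin 0) p
      have hc : c ≠ 0 := fun h => hp (by simp [h])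
      simp [hc]
  | succ n ih =>
      intro p hp
      set e := MeasurableEquiv.piFinSuccAbove (fun _ : Fin (n + 1) => ℝ) 0 with he
      set A : Set (ℝ × (Fin n → ℝ)) :=
        {ys | MvPolynomial.eval (Fin.cons ys.1 ys.2) p = 0} with hA
      have hAmeas : MeasurableSet A := by
        have hcont : Continuous fun ys : ℝ × (Fin n → ℝ) =>
            MvPolynomial.eval (Fin.cons ys.1 ys.2) p := by
          refine (continuous_mv_eval' p).comp ?_
          refine continuous_pi fun i => ?_
          refine Fin.cases ?_ ?_ i
          · exact continuous_fst
          · intro j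
            simp only [Fin.cons_succ]
            exact (continuous_apply j).comp continuous_snd
        exact (isClosed_singleton.preimage hcont).measurableSet
      have hS : {x : Fin (n+1) → ℝ | MvPolynomial.eval x p = 0} = e ⁻¹' A := by
        ext x
        have hx : (Fin.cons (x 0) (fun j => x ((0:Fin (n+1)).succAbove j)) : Fin (n+1) → ℝ) = x := by
          simp only [Fin.succAbove_zero]
          exact Fin.cons_self_tail x
        simp only [mem_setOf_eq, mem_preimage, he, hA,
          MeasurableEquiv.piFinSuccAbove_apply]
        rw [show ((Fin.insertNthEquiv (fun _ => ℝ) 0).symm x) =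
          (x 0, fun j => x ((0:Fin (n+1)).succAbove j)) from rfl]
        simp only [mem_setOf_eq]
        rw [hx]
      -- transfer measure
      have hmp := MeasureTheory.measurePreserving_piFinSuccAbove
        (fun _ : Fin (n+1) => (volume : Measure ℝ)) 0
      have hvol : (volume : Measure (Fin (n+1) → ℝ)) {x | MvPolynomial.eval x p = 0}
          = ((volume : Measure ℝ).prod (Measure.pi fun _ : Fin n => (volume : Measure ℝ))) A := by
        rw [hS, MeasureTheory.volume_pi]
        exact hmp.measure_preimage hAmeas.nullMeasurableSet
      rw [hvol]
      -- swap the product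
      have hswap : ((volume : Measure ℝ).prod (Measure.pi fun _ : Fin n => (volume : Measure ℝ))) A
          = ((Measure.pi fun _ : Fin n => (volume : Measure ℝ)).prod (volume : Measure ℝ))
            (Prod.swap ⁻¹' A) := by
        rw [← MeasureTheory.Measure.prod_swap]
        rw [Measure.map_apply measurable_swap hAmeas]
      rw [hswap]
      rw [MeasureTheory.Measure.measure_prod_null (measurable_swap hAmeas)]
      -- now a.e. over the tail
      -- pick a nonzero coefficient of finSuccEquiv p
      have hq : (MvPolynomial.finSuccEquiv ℝ n p) ≠ 0 := by
        intro h
        exact hp ((map_eq_zero_iff _ (AlgEquiv.injective _)).mp h)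
      obtain ⟨k, hk⟩ : ∃ k, (MvPolynomial.finSuccEquiv ℝ n p).coeff k ≠ 0 := by
        by_contra h
        push_neg at h
        exact hq (Polynomial.ext fun k => by simpa using h k)
      have hnull := ih _ hk
      refine Filter.Eventually.mono ?_ (fun s hs => hs)
      have : ∀ᵐ s ∂(volume : Measure (Fin n → ℝ)),
          MvPolynomial.eval s ((MvPolynomial.finSuccEquiv ℝ n p).coeff k) ≠ 0 := by
        rw [MeasureTheory.ae_iff]
        simpa using hnull
      refine this.mono fun s hs => ?_
      -- slice is root set of a nonzero polynomial
      set q : Polynomial ℝ := Polynomial.map (MvPolynomial.eval s) (MvPolynomial.finSuccEquiv ℝ n p)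
        with hqdef
      have hqne : q ≠ 0 := by
        intro h
        apply hs
        have := congrArg (fun r => Polynomial.coeff r k) h
        simpa [hqdef, Polynomial.coeff_map] using this
      have hslice : (fun y => (s, y)) ⁻¹' (Prod.swap ⁻¹' A) ⊆ {y | q.IsRoot y} := by
        intro y hy
        simp only [mem_preimage, Prod.swap_prod_mk, hA, mem_setOf_eq] at hy
        have := MvPolynomial.eval_eq_eval_mv_eval' s y p
        simp only [Polynomial.IsRoot, mem_setOf_eq, hqdef]
        rw [← this]
        exact hy
      refine measure_mono_null hslice ?_
      exact ((Polynomial.finite_setOf_isRoot hqne).measure_zero _)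

lemma eval_map_sumToIter {S₁ S₂ : Type*} (x : S₁ → ℝ) (a : S₂ → ℝ)
    (P : MvPolynomial (S₁ ⊕ S₂) ℝ) :
    MvPolynomial.eval x (MvPolynomial.map (MvPolynomial.eval a)
        (MvPolynomial.sumToIter ℝ S₁ S₂ P))
      = MvPolynomial.eval (Sum.elim x a) P := by
  induction P using MvPolynomial.induction_on with
  | C c => simp [MvPolynomial.sumToIter_C]
  | add p q hp hq => simp [map_add, hp, hq]
  | mul_X p i hp =>
      cases i with
      | inl b => simp [map_mul, MvPolynomial.sumToIter_Xl, hp]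
      | inr c => simp [map_mul, MvPolynomial.sumToIter_Xr, hp]

/-- index equiv splitting off block 0 -/
def blockEquiv (t m : ℕ) : (Fin (t+1) × Fin m) ≃ ((Fin t × Fin m) ⊕ Fin m) where
  toFun q := Fin.cases (Sum.inr q.2) (fun i' => Sum.inl (i', q.2)) q.1
  invFun z := Sum.elim (fun q => (q.1.succ, q.2)) (fun j => (0, j)) z
  left_inv := by
    rintro ⟨i, j⟩
    refine Fin.cases ?_ ?_ i <;> simp
  right_inv := by
    rintro (⟨i, j⟩ | j) <;> simp

lemma pi_eval_ne_zero (m : ℕ) : ∀ (t : ℕ) (μ : Fin t → Measure (Fin m → ℝ))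
    (_ : ∀ i, IsProbabilityMeasure (μ i)) (_ : ∀ i, μ i ≪ volume)
    (p : MvPolynomial (Fin t × Fin m) ℝ), p ≠ 0 →
    (Measure.pi μ) {x : Fin t → Fin m → ℝ |
      MvPolynomial.eval (fun q => x q.1 q.2) p = 0} = 0 := by
  intro t
  induction t with
  | zero =>
      intro μ hprob hac p hp
      obtain ⟨c, rfl⟩ := C_surjective (Fin 0 × Fin m) p
      have hc : c ≠ 0 := fun h => hp (by simp [h])
      simp [hc]
  | succ t ih =>
      intro μ hprob hac p hp
      haveI := hprob
      set e := MeasurableEquiv.piFinSuccAbove (fun _ : Fin (t + 1) => (Fin m → ℝ)) 0 with he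
      set A : Set ((Fin m → ℝ) × (Fin t → Fin m → ℝ)) :=
        {ys | MvPolynomial.eval
          (fun q : Fin (t+1) × Fin m =>
            Sum.elim (fun r : Fin t × Fin m => ys.2 r.1 r.2) ys.1 (blockEquiv t m q)) p = 0} with hA
      have hAmeas : MeasurableSet A := by
        have hcont : Continuous fun ys : (Fin m → ℝ) × (Fin t → Fin m → ℝ) =>
            MvPolynomial.eval
              (fun q : Fin (t+1) × Fin m =>
                Sum.elim (fun r : Fin t × Fin m => ys.2 r.1 r.2) ys.1 (blockEquiv t m q)) p := by
          refine (continuous_mv_eval' p).comp ?_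
          refine continuous_pi fun q => ?_
          rcases h : blockEquiv t m q with r | j
          · simp only [h, Sum.elim_inl]
            exact (continuous_apply r.2).comp ((continuous_apply r.1).comp continuous_snd)
          · simp only [h, Sum.elim_inr]
            exact (continuous_apply j).comp continuous_fst
        exact (isClosed_singleton.preimage hcont).measurableSet
      have hS : {x : Fin (t+1) → Fin m → ℝ |
          MvPolynomial.eval (fun q => x q.1 q.2) p = 0} = e ⁻¹' A := by
        ext x
        simp only [mem_setOf_eq, mem_preimage, he, hA, MeasurableEquiv.piFinSuccAbove_apply]
        rw [show ((Fin.insertNthEquiv (fun _ : Fin (t+1) => (Fin m → ℝ)) 0).symm x) =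
          (x 0, fun j => x ((0:Fin (t+1)).succAbove j)) from rfl]
        simp only [mem_setOf_eq, Fin.succAbove_zero]
        have : (fun q : Fin (t+1) × Fin m =>
            Sum.elim (fun r : Fin t × Fin m => x r.1.succ r.2) (x 0) (blockEquiv t m q))
            = fun q : Fin (t+1) × Fin m => x q.1 q.2 := by
          funext q
          rcases q with ⟨i, j⟩
          refine Fin.cases ?_ ?_ i <;> simp [blockEquiv]
        rw [this]
      have hmp := MeasureTheory.measurePreserving_piFinSuccAbove μ 0
      have hvol : (Measure.pi μ) {x : Fin (t+1) → Fin m → ℝ |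
            MvPolynomial.eval (fun q => x q.1 q.2) p = 0}
          = ((μ 0).prod (Measure.pi fun j : Fin t => μ ((0:Fin (t+1)).succAbove j))) A := by
        rw [hS]
        exact hmp.measure_preimage hAmeas.nullMeasurableSet
      rw [hvol, MeasureTheory.Measure.measure_prod_null hAmeas]
      -- rename and split p
      set P : MvPolynomial ((Fin t × Fin m) ⊕ Fin m) ℝ :=
        MvPolynomial.rename (blockEquiv t m) p with hP
      have hPne : P ≠ 0 := by
        intro h
        refine hp (MvPolynomial.rename_injective _ (blockEquiv t m).injective ?_)
        rw [map_zero, ← hP]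
        exact h
      set Q := MvPolynomial.sumToIter ℝ (Fin t × Fin m) (Fin m) P with hQ
      have hQne : Q ≠ 0 := by
        intro h
        apply hPne
        have hinj := (MvPolynomial.sumAlgEquiv ℝ (Fin t × Fin m) (Fin m)).injective
        apply hinj
        rw [map_zero]
        rw [show ((MvPolynomial.sumAlgEquiv ℝ (Fin t × Fin m) (Fin m)) P)
          = MvPolynomial.sumToIter ℝ (Fin t × Fin m) (Fin m) P from
          by
            have key : ∀ R : MvPolynomial ((Fin t × Fin m) ⊕ Fin m) ℝ,
                MvPolynomial.sumAlgEquiv ℝ (Fin t × Fin m) (Fin m) R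
                  = MvPolynomial.sumToIter ℝ (Fin t × Fin m) (Fin m) R := by
              intro R
              induction R using MvPolynomial.induction_on with
              | C c => simp [MvPolynomial.sumToIter_C, MvPolynomial.sumAlgEquiv_C_inl]
              | add p q hp hq => simp [map_add, hp, hq]
              | mul_X p i hp =>
                  cases i <;> simp [map_mul, hp, MvPolynomial.sumAlgEquiv_X_inl,
                    MvPolynomial.sumAlgEquiv_X_inr, MvPolynomial.sumToIter_Xl,
                    MvPolynomial.sumToIter_Xr]
            exact key P]
        exact h
      obtain ⟨s0, hs0⟩ := MvPolynomial.ne_zero_iff.mp hQne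
      have hcne : (MvPolynomial.coeff s0 Q) ≠ 0 := hs0
      -- a.e. a, the coefficient evaluates to nonzero
      have hnullc : (volume : Measure (Fin m → ℝ))
          {a | MvPolynomial.eval a (MvPolynomial.coeff s0 Q) = 0} = 0 := by
        -- coeff s0 Q : MvPolynomial (Fin m) ℝ
        have := vol_eval_ne_zero m (MvPolynomial.coeff s0 Q) hcne
        exact this
      have hae : ∀ᵐ a ∂(μ 0), MvPolynomial.eval a (MvPolynomial.coeff s0 Q) ≠ 0 := by
        rw [MeasureTheory.ae_iff]
        refine hac 0 ?_
        simpa using hnullc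
      refine hae.mono fun a ha => ?_
      show (Measure.pi fun j : Fin t => μ ((0:Fin (t+1)).succAbove j)) (Prod.mk a ⁻¹' A) = 0
      -- the slice polynomial
      set pa : MvPolynomial (Fin t × Fin m) ℝ := MvPolynomial.map (MvPolynomial.eval a) Q with hpa
      have hpane : pa ≠ 0 := by
        intro h
        apply ha
        have := congrArg (MvPolynomial.coeff s0) h
        simpa [hpa, MvPolynomial.coeff_map] using this
      have hslice : (Prod.mk a ⁻¹' A) =
          {y : Fin t → Fin m → ℝ | MvPolynomial.eval (fun q => y q.1 q.2) pa = 0} := by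
        ext y
        simp only [mem_preimage, hA, mem_setOf_eq, hpa, hQ, hP]
        rw [eval_map_sumToIter (fun r : Fin t × Fin m => y r.1 r.2) a]
        rw [MvPolynomial.eval_rename]
        rfl
      rw [hslice]
      exact ih _ (fun j => hprob _) (fun j => hac _) pa hpane


lemma nat_div_eq_iff {d : ℕ} (hd : 0 < d) (x q : ℕ) :
    x / d = q ↔ q * d ≤ x ∧ x < (q + 1) * d := by
  constructor
  · rintro rfl
    have h1 : x / d * d + x % d = x := Nat.div_add_mod' x d
    have h2 := Nat.mod_lt x hd
    have h3 : (x / d + 1) * d = x / d * d + d := by ring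
    omega
  · rintro ⟨h1, h2⟩
    have h3 : q ≤ x / d := (Nat.le_div_iff_mul_le hd).mpr h1
    have h4 : x / d < q + 1 := (Nat.div_lt_iff_lt_mul hd).mpr h2
    omega

section mat
variable (m d T : ℕ) (hd : 1 ≤ d) (hT' : m * d + d ≤ T + 1)

/-- the polynomial Hankel-type matrix of the first `m*d` windows -/
noncomputable def Mpoly : Matrix (Fin (m*d)) (Fin (m*d)) (MvPolynomial (Fin T × Fin m) ℝ) :=
  fun k b => X (⟨(k : ℕ) + (b : ℕ) % d,
      by have h1 := k.isLt; have h2 := Nat.mod_lt (b : ℕ) hd; omega⟩,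
    ⟨(b : ℕ) / d, (Nat.div_lt_iff_lt_mul hd).mpr b.isLt⟩)

/-- witness input sequence -/
noncomputable def wit : Fin T × Fin m → ℝ :=
  fun q => if ((q.1 : ℕ) + 1) / d = (q.2 : ℕ) + 1 then 1 else 0

lemma wit_det_ne_zero :
    ((Mpoly m d T hd hT').map (MvPolynomial.eval (wit m d T))).det ≠ 0 := by
  set B := (Mpoly m d T hd hT').map (MvPolynomial.eval (wit m d T)) with hB
  intro hdet
  obtain ⟨v, hv, hveq⟩ := Matrix.exists_vecMul_eq_zero_iff.mpr hdet
  apply hv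
  have key : ∀ r : ℕ, ∀ a : Fin (m*d), m*d - (a : ℕ) ≤ r → v a = 0 := by
    intro r
    induction r with
    | zero => intro a h; exact absurd h (by have := a.isLt; omega)
    | succ r ih =>
        intro a _
        have h2 : (a:ℕ) % d < d := Nat.mod_lt _ hd
        have h0 : (a:ℕ)/d < m := (Nat.div_lt_iff_lt_mul hd).mpr a.isLt
        have h3 : (a:ℕ)/d * d + (a:ℕ) % d = (a:ℕ) := Nat.div_add_mod' _ d
        have hbval : (a : ℕ) / d * d + (d - 1 - (a : ℕ) % d) < m * d := by
          have h4 : ((a:ℕ)/d + 1) * d ≤ m*d := Nat.mul_le_mul_right d h0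
          have h5 : ((a:ℕ)/d + 1) * d = (a:ℕ)/d * d + d := by ring
          omega
        have hbmod : ((a : ℕ) / d * d + (d - 1 - (a : ℕ) % d)) % d = d - 1 - (a : ℕ) % d := by
          rw [Nat.add_comm, Nat.add_mul_mod_self_right]
          exact Nat.mod_eq_of_lt (by omega)
        have hbdiv : ((a : ℕ) / d * d + (d - 1 - (a : ℕ) % d)) / d = (a : ℕ) / d := by
          rw [Nat.add_comm, Nat.add_mul_div_right _ _ hd, Nat.div_eq_of_lt (by omega)]
          omega
        have hcond : ∀ k : Fin (m*d),
            (((k:ℕ) + ((a : ℕ) / d * d + (d - 1 - (a : ℕ) % d)) % d + 1) / d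
              = ((a : ℕ) / d * d + (d - 1 - (a : ℕ) % d)) / d + 1)
              ↔ ((a:ℕ) ≤ (k:ℕ) ∧ (k:ℕ) < (a:ℕ) + d) := by
          intro k
          rw [hbmod, hbdiv, nat_div_eq_iff hd]
          have h4 : ((a:ℕ)/d + 1) * d = (a:ℕ)/d * d + d := by ring
          have h5 : ((a:ℕ)/d + 1 + 1) * d = (a:ℕ)/d * d + d + d := by ring
          rw [h4, h5]
          omega
        have hentry : ∀ k : Fin (m*d), B k ⟨_, hbval⟩
            = if (a:ℕ) ≤ (k:ℕ) ∧ (k:ℕ) < (a:ℕ) + d then 1 else 0 := by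
          intro k
          simp only [hB, Matrix.map_apply, Mpoly, eval_X, wit]
          exact if_congr (hcond k) rfl rfl
        have heq := congrFun hveq ⟨_, hbval⟩
        simp only [Matrix.vecMul, dotProduct, Pi.zero_apply, hentry,
          mul_ite, mul_one, mul_zero] at heq
        have hsum : ∀ k : Fin (m*d), k ∈ Finset.univ → k ≠ a →
            (if (a:ℕ) ≤ (k:ℕ) ∧ (k:ℕ) < (a:ℕ) + d then v k else 0) = 0 := by
          intro k _ hk
          by_cases hcond2 : (a:ℕ) ≤ (k:ℕ) ∧ (k:ℕ) < (a:ℕ) + d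
          · have hka : (a:ℕ) < (k:ℕ) := by
              rcases Nat.lt_or_ge (a:ℕ) (k:ℕ) with h | h
              · exact h
              · exact absurd (Fin.ext (le_antisymm h hcond2.1) : k = a) hk
            rw [if_pos hcond2, ih k (by have := k.isLt; omega)]
          · rw [if_neg hcond2]
        rw [Finset.sum_eq_single a hsum (fun h => absurd (Finset.mem_univ a) h)] at heq
        rw [if_pos ⟨le_refl _, by omega⟩] at heq
        exact heq
  funext a
  exact key (m*d) a (by omega)
end mat

section span
variable (m d : ℕ) (hd : 1 ≤ d)

/-- re-coordinatization of windows -/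
noncomputable def winEquiv : (Fin d → Fin m → ℝ) ≃ₗ[ℝ] (Fin (m*d) → ℝ) where
  toFun w := fun b => w ⟨(b:ℕ) % d, Nat.mod_lt _ hd⟩ ⟨(b:ℕ)/d, (Nat.div_lt_iff_lt_mul hd).mpr b.isLt⟩
  invFun y := fun s p => y ⟨(p:ℕ) * d + (s:ℕ), by
    have h4 : ((p:ℕ) + 1) * d ≤ m*d := Nat.mul_le_mul_right d p.isLt
    have h5 : ((p:ℕ) + 1) * d = (p:ℕ) * d + d := by ring
    have := s.isLt
    omega⟩
  map_add' w₁ w₂ := rfl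
  map_smul' c w := rfl
  left_inv w := by
    funext s p
    have e1 : ((p:ℕ) * d + (s:ℕ)) % d = (s:ℕ) := by
      rw [Nat.add_comm, Nat.add_mul_mod_self_right, Nat.mod_eq_of_lt s.isLt]
    have e2 : ((p:ℕ) * d + (s:ℕ)) / d = (p:ℕ) := by
      rw [Nat.add_comm, Nat.add_mul_div_right _ _ hd, Nat.div_eq_of_lt s.isLt]
      omega
    simp only [e1, e2, Fin.eta]
  right_inv y := by
    funext b
    have e1 : (b:ℕ) / d * d + (b:ℕ) % d = (b:ℕ) := Nat.div_add_mod' (b:ℕ) d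
    simp only [e1, Fin.eta]

lemma span_of_det_ne_zero (T : ℕ) (hT' : m * d + d ≤ T + 1) (x : Fin T → Fin m → ℝ)
    (hdet : ((Mpoly m d T hd hT').map (MvPolynomial.eval (fun q => x q.1 q.2))).det ≠ 0) :
    Submodule.span ℝ
      {w : Fin d → (Fin m → ℝ) | ∃ j : ℕ, ∃ hj : j + d ≤ T,
        w = fun s : Fin d =>
          x ⟨j + s, lt_of_lt_of_le (Nat.add_lt_add_left s.isLt j) hj⟩} = ⊤ := by
  set B := (Mpoly m d T hd hT').map (MvPolynomial.eval (fun q => x q.1 q.2)) with hB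
  set W : Set (Fin d → Fin m → ℝ) :=
    {w : Fin d → (Fin m → ℝ) | ∃ j : ℕ, ∃ hj : j + d ≤ T,
        w = fun s : Fin d =>
          x ⟨j + s, lt_of_lt_of_le (Nat.add_lt_add_left s.isLt j) hj⟩} with hW
  -- rows of B span everything
  have hrows : Submodule.span ℝ (Set.range B) = ⊤ := by
    rw [show Set.range B = Set.range B.row from rfl, ← range_vecMulLinear]
    rw [LinearMap.range_eq_top]
    intro y
    refine ⟨Matrix.vecMul y B⁻¹, ?_⟩
    have hunit : IsUnit B.det := isUnit_iff_ne_zero.mpr hdet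
    rw [Matrix.vecMulLinear_apply, Matrix.vecMul_vecMul, Matrix.nonsing_inv_mul B hunit,
      Matrix.vecMul_one]
  -- each row is the image of a window
  have hsub : Set.range B ⊆ (winEquiv m d hd) '' W := by
    rintro _ ⟨k, rfl⟩
    have hjd : (k:ℕ) + d ≤ T := by
      have h1 := k.isLt
      omega
    refine ⟨fun s : Fin d => x ⟨(k:ℕ) + s, lt_of_lt_of_le (Nat.add_lt_add_left s.isLt _) hjd⟩,
      ⟨(k:ℕ), hjd, rfl⟩, ?_⟩
    funext b
    simp only [winEquiv, LinearEquiv.coe_mk, LinearMap.coe_mk, AddHom.coe_mk]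
    simp only [hB, Matrix.map_apply, Mpoly, eval_X]
  have htop : Submodule.map (winEquiv m d hd : (Fin d → Fin m → ℝ) →ₗ[ℝ] (Fin (m*d) → ℝ))
      (Submodule.span ℝ W) = ⊤ := by
    rw [← Submodule.span_image]
    refine le_antisymm le_top ?_
    rw [← hrows]
    exact Submodule.span_mono hsub
  have hmaptop : Submodule.map
      ((winEquiv m d hd : (Fin d → Fin m → ℝ) →ₗ[ℝ] (Fin (m*d) → ℝ))) ⊤ = ⊤ := by
    rw [Submodule.map_top]
    exact LinearEquiv.range _
  exact Submodule.map_injective_of_injective (winEquiv m d hd).injective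
    (htop.trans hmaptop.symm)
end span


lemma map_joint_eq_pi {T : ℕ} {β : Type*} [MeasurableSpace β] {Ω : Type*} [MeasurableSpace Ω]
    (P : Measure Ω) [IsProbabilityMeasure P] (u : Fin T → Ω → β)
    (hmeas : ∀ i, Measurable (u i))
    (hindep : ProbabilityTheory.iIndepFun u P) :
    P.map (fun ω i => u i ω) = Measure.pi (fun i => P.map (u i)) := by
  haveI : ∀ i, IsProbabilityMeasure (P.map (u i)) :=
    fun i => Measure.isProbabilityMeasure_map (hmeas i).aemeasurable
  refine (Measure.pi_eq fun s hs => ?_).symm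
  rw [Measure.map_apply (measurable_pi_lambda _ hmeas) (MeasurableSet.univ_pi hs)]
  have hpre : (fun ω i => u i ω) ⁻¹' (Set.univ.pi s) = ⋂ i ∈ Finset.univ, u i ⁻¹' s i := by
    ext ω
    simp [Set.mem_univ_pi]
  rw [hpre, hindep.measure_inter_preimage_eq_mul Finset.univ (fun i _ => hs i)]
  exact Finset.prod_congr rfl fun i _ => (Measure.map_apply (hmeas i) (hs i)).symm

/-- independent ℝ^m-valued random variables u₀,…,u_{T-1} whose laws
are absolutely continuous with respect to Lebesgue measure form, almost surely, a
persistently exciting sequence of order d, provided T ≥ (m+1)d - 1: almost surely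
the windows of length d span (ℝ^m)^d. -/
theorem stmt_8 (m d T : ℕ) (hm : 1 ≤ m) (hd : 1 ≤ d) (hT : (m + 1) * d - 1 ≤ T)
    (Ω : Type*) [MeasurableSpace Ω] (P : Measure Ω) [IsProbabilityMeasure P]
    (u : Fin T → Ω → (Fin m → ℝ))
    (hmeas : ∀ i, Measurable (u i))
    (hindep : ProbabilityTheory.iIndepFun u P)
    (hac : ∀ i, P.map (u i) ≪ (volume : Measure (Fin m → ℝ))) :
    ∀ᵐ ω ∂P,
      Submodule.span ℝ
        {w : Fin d → (Fin m → ℝ) | ∃ j : ℕ, ∃ hj : j + d ≤ T,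
          w = fun s : Fin d =>
            u ⟨j + s, lt_of_lt_of_le (Nat.add_lt_add_left s.isLt j) hj⟩ ω} = ⊤ := by
  have hT' : m * d + d ≤ T + 1 := by
    rw [Nat.succ_mul] at hT
    omega
  set p : MvPolynomial (Fin T × Fin m) ℝ := (Mpoly m d T hd hT').det with hp
  have hpne : p ≠ 0 := by
    intro h0
    apply wit_det_ne_zero m d T hd hT'
    have hdet2 := RingHom.map_det (MvPolynomial.eval (wit m d T)) (Mpoly m d T hd hT')
    rw [RingHom.mapMatrix_apply] at hdet2
    rw [← hdet2, ← hp, h0, map_zero]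
  set μ : Fin T → Measure (Fin m → ℝ) := fun i => P.map (u i) with hμ
  haveI hprob : ∀ i, IsProbabilityMeasure (μ i) :=
    fun i => Measure.isProbabilityMeasure_map (hmeas i).aemeasurable
  set S : Set (Fin T → Fin m → ℝ) :=
    {x | MvPolynomial.eval (fun q : Fin T × Fin m => x q.1 q.2) p = 0} with hS
  have hSmeas : MeasurableSet S := by
    have hcont : Continuous fun x : Fin T → Fin m → ℝ =>
        MvPolynomial.eval (fun q : Fin T × Fin m => x q.1 q.2) p := by
      refine (continuous_mv_eval' p).comp ?_
      exact continuous_pi fun q => (continuous_apply q.2).comp (continuous_apply q.1)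
    exact (isClosed_singleton.preimage hcont).measurableSet
  have hSnull : Measure.pi μ S = 0 := pi_eval_ne_zero m T μ hprob hac p hpne
  set V : Ω → (Fin T → Fin m → ℝ) := fun ω i => u i ω with hV
  have hVmeas : Measurable V := measurable_pi_lambda _ hmeas
  have hmap : P.map V = Measure.pi μ := map_joint_eq_pi P u hmeas hindep
  have hnull : P (V ⁻¹' S) = 0 := by
    rw [← Measure.map_apply hVmeas hSmeas, hmap]
    exact hSnull
  have hae : ∀ᵐ ω ∂P, V ω ∉ S := by
    rw [MeasureTheory.ae_iff]
    simp only [not_not]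
    exact hnull
  refine hae.mono fun ω hω => ?_
  have hdet : ((Mpoly m d T hd hT').map
      (MvPolynomial.eval (fun q : Fin T × Fin m => V ω q.1 q.2))).det ≠ 0 := by
    have hdet2 := RingHom.map_det
      (MvPolynomial.eval (fun q : Fin T × Fin m => V ω q.1 q.2)) (Mpoly m d T hd hT')
    rw [RingHom.mapMatrix_apply] at hdet2
    rw [← hdet2]
    exact fun h => hω (by simpa [hS, hp] using h)
  have := span_of_det_ne_zero m d hd T hT' (V ω) hdet
  exact this
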